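/- Let ℏ, λ₀, λ₁, λ∞, ν_{0+}, ν_{0−}, ν_{1+}, ν_{1−}, ν_{∞+}, ν_{∞−} ∈ ℝ with ν_{0+}+ν_{0−}+ν_{1+}+ν_{1−}+ν_{∞+}+ν_{∞−} = 1, and set ν_j = ν_{j+} − ν_{j−}, λ̂_j = λ_j − ℏν_j/2 for j ∈ {0,1,∞}. Define q(x) = ℏ·[(1−ν_{0+}−ν_{0−})/x + (1−ν_{1+}−ν_{1−})/(x−1)] and r(x) = −(λ∞²x² − (λ∞²+λ₀²−λ₁²)x + λ₀²)/(x²(1−x)²) + ℏ·[−(ν_{0+}−ν_{0−})λ₀/(x²(x−1)) + (ν_{1+}−ν_{1−})λ₁/(x(x−1)²) + (ν_{∞+}−ν_{∞−})λ∞/(x(x−1))] + ℏ²·[−ν_{0+}ν_{0−}/(x²(x−1)) + ν_{1+}ν_{1−}/(x(x−1)²) + ν_{∞+}ν_{∞−}/(x(x−1))]. Then for every real x ∉ {0,1}, (1/4)q(x)² − r(x) + (ℏ/2)q'(x) = (λ̂∞²x² − (λ̂∞²+λ̂₀²−λ̂₁²)x + λ̂₀²)/(x²(x−1)²) − ℏ²·(x²−x+1)/(4x²(x−1)²).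 In particular the SL-form of the quantum Gauss curve depends on the ν parameters only through the differences ν_j = ν_{j+} − ν_{j−}. -/

import Mathlib

/-- The SL-form potential `Q = (1/4)q² − r + (ℏ/2)q'` of the quantum Gauss curve
equals `(λ̂∞²x² − (λ̂∞²+λ̂₀²−λ̂₁²)x + λ̂₀²)/(x²(x−1)²) − ℏ²(x²−x+1)/(4x²(x−1)²)`,
so it depends on the `ν` parameters only through the differences `ν_j = ν_{j+} − ν_{j−}`. -/
theorem stmt11 (hbar l0 l1 li n0p n0m n1p n1m nip nim : ℝ)
    (hsum : n0p + n0m + n1p + n1m + nip + nim = 1)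
    (q r : ℝ → ℝ)
    (hq : ∀ x : ℝ, q x = hbar * ((1 - n0p - n0m) / x + (1 - n1p - n1m) / (x - 1)))
    (hr : ∀ x : ℝ, r x =
      -(li ^ 2 * x ^ 2 - (li ^ 2 + l0 ^ 2 - l1 ^ 2) * x + l0 ^ 2)
          / (x ^ 2 * (1 - x) ^ 2)
      + hbar * (-((n0p - n0m) * l0) / (x ^ 2 * (x - 1))
                + (n1p - n1m) * l1 / (x * (x - 1) ^ 2)
                + (nip - nim) * li / (x * (x - 1)))
      + hbar ^ 2 * (-(n0p * n0m) / (x ^ 2 * (x - 1))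
                    + n1p * n1m / (x * (x - 1) ^ 2)
                    + nip * nim / (x * (x - 1)))) :
    ∀ x : ℝ, x ≠ 0 → x ≠ 1 →
      1 / 4 * q x ^ 2 - r x + hbar / 2 * deriv q x =
        ((li - hbar * (nip - nim) / 2) ^ 2 * x ^ 2
          - ((li - hbar * (nip - nim) / 2) ^ 2 + (l0 - hbar * (n0p - n0m) / 2) ^ 2
              - (l1 - hbar * (n1p - n1m) / 2) ^ 2) * x
          + (l0 - hbar * (n0p - n0m) / 2) ^ 2) / (x ^ 2 * (x - 1) ^ 2)
        - hbar ^ 2 * (x ^ 2 - x + 1) / (4 * x ^ 2 * (x - 1) ^ 2) := by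
  intro x hx0 hx1
  have hx1' : x - 1 ≠ 0 := sub_ne_zero.mpr hx1
  have hxm : (1 : ℝ) - x ≠ 0 := fun h => hx1' (by linarith [h])
  have hqe : q = fun y : ℝ => hbar * ((1 - n0p - n0m) * y⁻¹ + (1 - n1p - n1m) * (y - 1)⁻¹) := by
    funext y
    rw [hq y]; ring
  have hd : HasDerivAt q
      (hbar * ((1 - n0p - n0m) * (-(x ^ 2)⁻¹) + (1 - n1p - n1m) * (-((x - 1) ^ 2)⁻¹))) x := by
    rw [hqe]
    have h1 : HasDerivAt (fun y : ℝ => y⁻¹) (-(x ^ 2)⁻¹) x := hasDerivAt_inv hx0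
    have h2 : HasDerivAt (fun y : ℝ => (y - 1)⁻¹) (-((x - 1) ^ 2)⁻¹) x := by
      have h3 : HasDerivAt (fun y : ℝ => y - 1) 1 x := (hasDerivAt_id x).sub_const 1
      have h4 := (hasDerivAt_inv hx1').comp x h3
      rw [mul_one] at h4
      exact h4
    exact ((h1.const_mul _).add (h2.const_mul _)).const_mul hbar
  rw [hd.deriv, hq x, hr x]
  have hnim : nim = 1 - n0p - n0m - n1p - n1m - nip := by linarith
  subst hnim
  field_simp
  ring
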